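/- Let X be a metric space with bounded geometry and p ∈ [1,∞). Let (x₁ⁿ, x₂ⁿ)_{n∈ℕ} be a sequence of pairwise distinct pairs in X × X with d(x₁ⁿ, x₂ⁿ) ≤ R for all n, and such that moreover the x₁ⁿ are pairwise distinct and the x₂ⁿ are pairwise distinct. Then the series Σₙ e_{x₁ⁿ, x₂ⁿ} of matrix units converges in the strong operator topology to a bounded operator on ℓ^p(X) of norm at most 1 and of propagation at most R; in particular, this operator lies in the ℓ^p uniform Roe algebra B^p_u(X). -/
import Mathlib


open scoped ENNReal

/-- A map between (pseudo)metric spaces is uniformly expansive if points at distance at most `R`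
are sent to points at distance at most `S = S(R)`. -/
def UniformlyExpansive {X Y : Type*} [PseudoMetricSpace X] [PseudoMetricSpace Y]
    (f : X → Y) : Prop :=
  ∀ R : ℝ, 0 < R → ∃ S : ℝ, 0 < S ∧ ∀ x₁ x₂ : X, dist x₁ x₂ ≤ R → dist (f x₁) (f x₂) ≤ S

/-- Two maps are close if they are at uniformly bounded distance. -/
def Close {X Y : Type*} [PseudoMetricSpace Y] (f g : X → Y) : Prop :=
  ∃ C : ℝ, 0 < C ∧ ∀ x : X, dist (f x) (g x) ≤ C

/-- `f : X → Y` is a coarse equivalence if it is uniformly expansive and admits a uniformly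
expansive coarse inverse. -/
def IsCoarseEquivalence {X Y : Type*} [PseudoMetricSpace X] [PseudoMetricSpace Y]
    (f : X → Y) : Prop :=
  UniformlyExpansive f ∧
    ∃ g : Y → X, UniformlyExpansive g ∧ Close (f ∘ g) id ∧ Close (g ∘ f) id

/-- A metric space has bounded geometry if balls of radius `R` have uniformly bounded
cardinality. -/
def BoundedGeometry (X : Type*) [PseudoMetricSpace X] : Prop :=
  ∀ R : ℝ, 0 ≤ R → ∃ N : ℕ, ∀ x : X,
    (Metric.closedBall x R).Finite ∧ (Metric.closedBall x R).ncard ≤ N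

/-- The standard basis vector `δ_x` of `ℓ^p(X)`. -/
noncomputable def delta {X : Type*} (p : ℝ≥0∞) (x : X) : lp (fun _ : X => ℂ) p :=
  letI := Classical.decEq X
  lp.single p x 1

/-- The matrix coefficient `T_{xy} = (T δ_y)(x)` of a bounded operator on `ℓ^p`. -/
noncomputable def matCoef {X Y : Type*} (p : ℝ≥0∞) [Fact (1 ≤ p)]
    (T : lp (fun _ : X => ℂ) p →L[ℂ] lp (fun _ : Y => ℂ) p) (y : Y) (x : X) : ℂ :=
  T (delta p x) y

/-- `T` has propagation at most `R`. -/
def HasPropagationLE {X : Type*} [PseudoMetricSpace X] (p : ℝ≥0∞) [Fact (1 ≤ p)]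
    (T : lp (fun _ : X => ℂ) p →L[ℂ] lp (fun _ : X => ℂ) p) (R : ℝ) : Prop :=
  ∀ x y : X, matCoef p T x y ≠ 0 → dist x y ≤ R

/-- `T` has finite propagation. -/
def FiniteProp {X : Type*} [PseudoMetricSpace X] (p : ℝ≥0∞) [Fact (1 ≤ p)]
    (T : lp (fun _ : X => ℂ) p →L[ℂ] lp (fun _ : X => ℂ) p) : Prop :=
  ∃ R : ℝ, 0 ≤ R ∧ HasPropagationLE p T R

/-- The `ℓ^p` uniform Roe algebra of `X`, as the operator-norm closure of the set of
finite propagation bounded operators on `ℓ^p(X)`. -/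
noncomputable def RoeAlgSet (X : Type*) [PseudoMetricSpace X] (p : ℝ≥0∞) [Fact (1 ≤ p)] :
    Set (lp (fun _ : X => ℂ) p →L[ℂ] lp (fun _ : X => ℂ) p) :=
  closure {T | FiniteProp p T}

private lemma lp_single_coord {X : Type*} [DecidableEq X] (p : ℝ≥0∞) (x : X) (c : ℂ)
    (y : X) : (lp.single p x c : ∀ _ : X, ℂ) y = if y = x then c else 0 := by
  rw [lp.single_apply]
  by_cases h : y = x <;> simp [h]

/-- Let `(x₁ⁿ, x₂ⁿ)` be pairwise distinct pairs in `X × X` (indeed with the `x₁ⁿ` pairwise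
distinct and the `x₂ⁿ` pairwise distinct) with `d(x₁ⁿ, x₂ⁿ) ≤ R`. Then the series of matrix
units `Σₙ e_{x₁ⁿ, x₂ⁿ}` converges in the strong operator topology to a bounded operator of
norm at most `1` and propagation at most `R`, which lies in `B^p_u(X)`. -/
theorem sum_of_matrix_units_in_Roe_algebra {X : Type*} [MetricSpace X]
    (hX : BoundedGeometry X) (p : ℝ≥0∞) [Fact (1 ≤ p)] (hp : p ≠ ∞)
    (R : ℝ) (hR : 0 ≤ R) (x₁ x₂ : ℕ → X)
    (hdist : ∀ n : ℕ, dist (x₁ n) (x₂ n) ≤ R)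
    (hinj₁ : Function.Injective x₁) (hinj₂ : Function.Injective x₂) :
    ∃ T : lp (fun _ : X => ℂ) p →L[ℂ] lp (fun _ : X => ℂ) p,
      (∀ ξ : lp (fun _ : X => ℂ) p,
        HasSum (fun n : ℕ => (ξ (x₂ n)) • delta p (x₁ n)) (T ξ)) ∧
      ‖T‖ ≤ 1 ∧ HasPropagationLE p T R ∧ T ∈ RoeAlgSet X p := by
  classical
  have hp1 : (1 : ℝ≥0∞) ≤ p := Fact.out
  have hp0 : p ≠ 0 := (lt_of_lt_of_le zero_lt_one hp1).ne'
  have hq0 : 0 < p.toReal := ENNReal.toReal_pos hp0 hp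
  -- the underlying function of the operator
  let F : (lp (fun _ : X => ℂ) p) → ∀ _ : X, ℂ := fun ξ x =>
    if h : ∃ n, x₁ n = x then ξ (x₂ h.choose) else 0
  have hF1 : ∀ ξ n, F ξ (x₁ n) = ξ (x₂ n) := by
    intro ξ n
    have h : ∃ m, x₁ m = x₁ n := ⟨n, rfl⟩
    have hc : h.choose = n := hinj₁ h.choose_spec
    simp only [F, dif_pos h, hc]
  have hF0 : ∀ ξ (x : X), x ∉ Set.range x₁ → F ξ x = 0 := by
    intro ξ x hx
    exact dif_neg (by simpa [Set.mem_range] using hx)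
  have hsum2 : ∀ ξ : lp (fun _ : X => ℂ) p,
      Summable fun n : ℕ => ‖ξ (x₂ n)‖ ^ p.toReal := by
    intro ξ
    exact ((memℓp_gen_iff hq0).mp (lp.memℓp ξ)).comp_injective hinj₂
  have hcomp : ∀ ξ, ∀ n : ℕ, ‖F ξ (x₁ n)‖ ^ p.toReal = ‖ξ (x₂ n)‖ ^ p.toReal := by
    intro ξ n; rw [hF1]
  have hzero : ∀ ξ, ∀ x ∉ Set.range x₁, ‖F ξ x‖ ^ p.toReal = 0 := by
    intro ξ x hx
    rw [hF0 ξ x hx]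
    simp [Real.zero_rpow hq0.ne']
  have hmem : ∀ ξ, Memℓp (F ξ) p := by
    intro ξ
    apply memℓp_gen
    refine (hinj₁.summable_iff (hzero ξ)).mp ?_
    have : (fun x => ‖F ξ x‖ ^ p.toReal) ∘ x₁ = fun n => ‖ξ (x₂ n)‖ ^ p.toReal := by
      funext n; exact hcomp ξ n
    rw [this]
    exact hsum2 ξ
  -- the linear map
  let L : lp (fun _ : X => ℂ) p →ₗ[ℂ] lp (fun _ : X => ℂ) p :=
    { toFun := fun ξ => ⟨F ξ, hmem ξ⟩
      map_add' := by
        intro ξ η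
        refine lp.ext (funext fun x => ?_)
        have : (↑(ξ + η) : ∀ _ : X, ℂ) = ↑ξ + ↑η := lp.coeFn_add ξ η
        by_cases h : ∃ n, x₁ n = x
        · simp only [F, dif_pos h, this, Pi.add_apply, lp.coeFn_add]
        · simp only [F, dif_neg h, lp.coeFn_add, Pi.add_apply, dif_neg h, add_zero]
      map_smul' := by
        intro c ξ
        refine lp.ext (funext fun x => ?_)
        by_cases h : ∃ n, x₁ n = x
        · simp only [F, dif_pos h, lp.coeFn_smul, Pi.smul_apply, RingHom.id_apply]
        · simp only [F, dif_neg h, lp.coeFn_smul, Pi.smul_apply, RingHom.id_apply,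
            smul_zero] }
  have hLcoe : ∀ ξ, ∀ x : X, (L ξ : ∀ _ : X, ℂ) x = F ξ x := fun ξ x => rfl
  -- norm bound
  have hbound : ∀ ξ, ‖L ξ‖ ≤ 1 * ‖ξ‖ := by
    intro ξ
    rw [one_mul]
    refine lp.norm_le_of_tsum_le hq0 (norm_nonneg ξ) ?_
    have hts : (∑' x : X, ‖F ξ x‖ ^ p.toReal) = ∑' n : ℕ, ‖ξ (x₂ n)‖ ^ p.toReal := by
      rw [← hinj₁.tsum_eq ?_]
      · exact tsum_congr fun n => hcomp ξ n
      · intro x hx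
        simp only [Function.mem_support, ne_eq, not_not] at *
        by_contra hxx
        exact hx (hzero ξ x fun hr => hxx (by simpa using hr))
    calc (∑' x : X, ‖(L ξ : ∀ _ : X, ℂ) x‖ ^ p.toReal)
        = ∑' n : ℕ, ‖ξ (x₂ n)‖ ^ p.toReal := hts
      _ ≤ ∑' x : X, ‖ξ x‖ ^ p.toReal := by
          refine Summable.tsum_le_tsum_of_inj x₂ hinj₂ (fun x _ => ?_) (fun n => le_rfl)
            (hsum2 ξ) ((memℓp_gen_iff hq0).mp (lp.memℓp ξ))
          positivity
      _ = ‖ξ‖ ^ p.toReal := (lp.norm_rpow_eq_tsum hq0 ξ).symm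
  let T : lp (fun _ : X => ℂ) p →L[ℂ] lp (fun _ : X => ℂ) p :=
    LinearMap.mkContinuous L 1 hbound
  have hTcoe : ∀ ξ, ∀ x : X, (T ξ : ∀ _ : X, ℂ) x = F ξ x := fun ξ x => rfl
  -- singles vs delta
  have hsingle : ∀ (c : ℂ) (x : X),
      (lp.single p x c : lp (fun _ : X => ℂ) p) = c • delta p x := by
    intro c x
    refine lp.ext (funext fun y => ?_)
    have h1 : (↑(c • delta p x) : ∀ _ : X, ℂ) y = c • (delta p x : ∀ _ : X, ℂ) y := by
      rw [lp.coeFn_smul]; rfl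
    rw [h1, lp_single_coord, show (delta p x : ∀ _ : X, ℂ) y = if y = x then 1 else 0
      from lp_single_coord p x 1 y]
    by_cases h : y = x <;> simp [h]
  have hprop : HasPropagationLE p T R := by
    intro x y hxy
    by_cases h : ∃ n, x₁ n = x
    · have hval : matCoef p T x y = (delta p y : ∀ _ : X, ℂ) (x₂ h.choose) := by
        simp only [matCoef, hTcoe, F, dif_pos h]
      rw [hval] at hxy
      have hy : x₂ h.choose = y := by
        by_contra hne
        exact hxy (by rw [show (delta p y : ∀ _ : X, ℂ) (x₂ h.choose) =
          if (x₂ h.choose) = y then 1 else 0 from lp_single_coord p y 1 _, if_neg hne])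
      rw [← h.choose_spec, ← hy]
      exact hdist h.choose
    · exact absurd (show matCoef p T x y = 0 by
        simp only [matCoef, hTcoe, F, dif_neg h]) hxy
  refine ⟨T, ?_, ?_, ?_, ?_⟩
  · -- HasSum
    intro ξ
    have h0 : ∀ x ∉ Set.range x₁,
        (lp.single p x ((T ξ : ∀ _ : X, ℂ) x) : lp (fun _ : X => ℂ) p) = 0 := by
      intro x hx
      rw [hTcoe, hF0 ξ x hx, hsingle, zero_smul]
    have := (hinj₁.hasSum_iff h0).mpr (lp.hasSum_single hp (T ξ))
    have heq : ((fun x : X => (lp.single p x ((T ξ : ∀ _ : X, ℂ) x) :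
        lp (fun _ : X => ℂ) p)) ∘ x₁) = fun n : ℕ => (ξ (x₂ n)) • delta p (x₁ n) := by
      funext n
      simp only [Function.comp_apply]
      rw [hTcoe, hF1, hsingle]
    rwa [heq] at this
  · -- norm
    exact LinearMap.mkContinuous_norm_le L zero_le_one hbound
  · exact hprop
  · exact subset_closure ⟨R, hR, hprop⟩
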